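/- arXiv:1708.07090 — 2 statements merged into one kernel-verified Lean document; each statement's English description precedes it below -/
import Mathlib

section
/- Let λ be a C_n partition with length l, and let l' = l if l is even and l' = l + 1 if l is odd; extend λ by setting λ_k = 0 for l < k ≤ l'. Then exactly l'/2 of the numbers s_k = l' − k + λ_k (1 ≤ k ≤ l') are odd and exactly l'/2 of them are even. Consequently, the symbol of λ in the C_n theory has the same number of entries in its top and bottom rows. -/
/-- `svals μ` lists the numbers `s_k = l - k + μ_k` (`1 ≤ k ≤ l`, `l` the
length of `μ`), computed with 0-based indices: entry `k` is `(l - 1 - k) + μ_k`.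
For weakly decreasing `μ` this list is strictly decreasing. -/
def svals (μ : List ℕ) : List ℕ :=
  μ.mapIdx (fun k a => (μ.length - 1 - k) + a)

/-- The odd values `2f_1+1 < … < 2f_M+1` of `svals μ`, in increasing order. -/
def oddVals (μ : List ℕ) : List ℕ :=
  ((svals μ).filter (fun x => decide (x % 2 = 1))).reverse

/-- The even values `2g_1 < … < 2g_{M'}` of `svals μ`, in increasing order. -/
def evenVals (μ : List ℕ) : List ℕ :=
  ((svals μ).filter (fun x => decide (x % 2 = 0))).reverse

/-- The top row of the symbol of `μ`: `α_i = f_i - i + 1` where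
`2f_i + 1` is the `i`-th smallest odd value of `svals μ` (0-based entry `i`
is `α_{i+1} = f_{i+1} - i`). -/
def topRow (μ : List ℕ) : List ℕ :=
  (oddVals μ).mapIdx (fun i v => (v - 1) / 2 - i)

/-- The bottom row of the symbol of `μ`: `β_i = g_i - i + 1` where `2g_i` is
the `i`-th smallest even value of `svals μ`. -/
def botRow (μ : List ℕ) : List ℕ :=
  (evenVals μ).mapIdx (fun i v => v / 2 - i)

theorem svals_cons (a : ℕ) (ν : List ℕ) :
    svals (a :: ν) = (ν.length + a) :: svals ν := by
  simp only [svals, List.mapIdx_cons, List.length_cons]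
  congr 1
  congr 1
  funext i x
  omega

theorem countOdd_half : ∀ (N : ℕ) (μ : List ℕ), μ.length ≤ N →
    μ.Pairwise (· ≥ ·) → (∀ m, Odd m → Even (μ.count m)) →
    (svals μ).countP (fun x => decide (x % 2 = 1)) = μ.length / 2 := by
  intro N
  induction N with
  | zero =>
    intro μ hμ _ _
    have : μ = [] := List.length_eq_zero_iff.mp (by omega)
    subst this
    simp [svals]
  | succ N ih =>
    intro μ hμ hs hC
    match μ with
    | [] => simp [svals]
    | a :: ν =>
      rcases Nat.even_or_odd a with ha | ha
      · -- even head
        have hν : (svals ν).countP (fun x => decide (x % 2 = 1)) = ν.length / 2 := by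
          apply ih ν (by simp at hμ; omega) hs.of_cons
          intro m hm
          have := hC m hm
          have hne : a ≠ m := by
            rintro rfl
            rw [Nat.even_iff] at ha; rw [Nat.odd_iff] at hm; omega
          simpa [List.count_cons, hne] using this
        rw [svals_cons, List.countP_cons, hν]
        have ha2 : a % 2 = 0 := Nat.even_iff.mp ha
        by_cases h : (ν.length + a) % 2 = 1 <;> simp [h] <;> omega
      · -- odd head: second element must equal a
        match ν with
        | [] =>
          exfalso
          have := hC a ha
          rw [List.count_cons, List.count_nil, if_pos (by simp)] at this
          simp [Nat.even_iff] at this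
        | b :: ν' =>
          have hba : b ≤ a := List.rel_of_pairwise_cons hs (a' := b) (by simp)
          have hcount : Even ((a :: b :: ν').count a) := hC a ha
          have hab : a = b := by
            by_contra hne
            have hmem : a ∈ b :: ν' := by
              by_contra hnm
              rw [List.count_cons_self, List.count_eq_zero.mpr hnm] at hcount
              simp [Nat.even_iff] at hcount
            rcases List.mem_cons.mp hmem with h1 | h1
            · exact hne h1
            · have := List.rel_of_pairwise_cons hs.of_cons h1
              omega
          subst hab
          have hν' : (svals ν').countP (fun x => decide (x % 2 = 1)) = ν'.length / 2 := by
            apply ih ν' (by simp at hμ ⊢; omega) hs.of_cons.of_cons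
            intro m hm
            have := hC m hm
            rcases eq_or_ne a m with rfl | hne
            · simp only [List.count_cons_self] at this
              rw [Nat.even_iff] at this ⊢
              omega
            · simpa [List.count_cons, hne] using this
          rw [svals_cons, svals_cons, List.countP_cons, List.countP_cons, hν']
          have ha2 : a % 2 = 1 := Nat.odd_iff.mp ha
          simp only [List.length_cons]
          by_cases h : (ν'.length + a) % 2 = 1 <;>
            [ (have h2 : ¬ (ν'.length + 1 + a) % 2 = 1 := by omega);
              (have h2 : (ν'.length + 1 + a) % 2 = 1 := by omega)] <;>
            simp [h, h2] <;> omega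


/-- For a `C_n` partition `lam` of `2n` with length `l`, let `lam'` be `lam`
with one extra part `0` appended when `l` is odd (so `lam'` has the padded
length `l'`).  Then exactly `l'/2` of the numbers `s_k = l' - k + λ_k`
(`1 ≤ k ≤ l'`) are odd and exactly `l'/2` are even; consequently the symbol of
`lam` in the `C_n` theory has the same number of entries in its two rows. -/
theorem Cn_symbol_row_sizes (n : ℕ) (hn : 0 < n) (lam : List ℕ)
    (hsort : lam.Pairwise (· ≥ ·))
    (hpos : ∀ x ∈ lam, 0 < x)
    (hsum : lam.sum = 2 * n)
    (hCn : ∀ m : ℕ, Odd m → Even (lam.count m)) :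
    ∀ lam' : List ℕ, lam' = (if lam.length % 2 = 1 then lam ++ [0] else lam) →
    ((svals lam').countP (fun x => decide (x % 2 = 1))) = lam'.length / 2 ∧
    ((svals lam').countP (fun x => decide (x % 2 = 0))) = lam'.length / 2 ∧
    (topRow lam').length = (botRow lam').length := by
  intro lam' hl'
  have hsort' : lam'.Pairwise (· ≥ ·) := by
    subst hl'
    split
    · simp [List.pairwise_append]; exact hsort
    · exact hsort
  have hCn' : ∀ m, Odd m → Even (lam'.count m) := by
    intro m hm
    subst hl'
    split
    · rw [List.count_append]
      have : m ≠ 0 := by rintro rfl; simp [Nat.odd_iff] at hm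
      simp [List.count_singleton, this, Ne.symm this]
      exact hCn m hm
    · exact hCn m hm
  have hlen : lam'.length % 2 = 0 := by
    subst hl'
    split
    · rename_i h; simp; omega
    · rename_i h; omega
  have hodd := countOdd_half lam'.length lam' le_rfl hsort' hCn'
  have hsl : (svals lam').length = lam'.length := by
    simp [svals]
  have heven : (svals lam').countP (fun x => decide (x % 2 = 0)) = lam'.length / 2 := by
    have h := List.length_eq_countP_add_countP (fun x => decide (x % 2 = 1)) (l := svals lam')
    have : (svals lam').countP (fun a => decide ¬(decide (a % 2 = 1)) = true)
        = (svals lam').countP (fun x => decide (x % 2 = 0)) := by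
      apply List.countP_congr
      intro x _
      simp only [decide_eq_true_eq, decide_eq_decide]
      omega
    rw [this] at h
    omega
  refine ⟨hodd, heven, ?_⟩
  simp only [topRow, botRow, List.length_mapIdx, oddVals, evenVals, List.length_reverse,
    ← List.countP_eq_length_filter]
  rw [hodd, heven]
end

section
/- (Rectangle rule) Let μ = (μ_1 ≥ … ≥ μ_l) be a weakly decreasing sequence of nonnegative integers and let i ≥ 1, m ≥ 1, r ≥ 1 with i + 2m − 1 ≤ l, μ_i = μ_{i+1} = … = μ_{i+2m−1}, and (i = 1 or μ_{i−1} ≥ μ_i + 2r). Let μ' be obtained from μ by adding 2r to each of the 2m parts μ_i, …, μ_{i+2m−1}. Among s_i, s_{i+1}, …, s_{i+2m−1} (where s_k = l − k + μ_k) there are exactly m odd values, occupying m consecutive ranks j, j+1, …, j+m−1 in the increasing list of odd values of s, and exactly m even values, occupying m consecutive ranks j', …, j'+m−1 in the increasing list of even values of s. The symbols (α, β) of μ and (α', β') of μ' satisfy: α'_a = α_a + r for j ≤ a ≤ j+m−1 and α'_a = α_a otherwise; β'_b = β_b + r for j' ≤ b ≤ j'+m−1 and β'_b = β_b otherwise.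 -/
private lemma svals_length (μ : List ℕ) : (svals μ).length = μ.length := by
  simp [svals]

private lemma svals_getElem (μ : List ℕ) (k : ℕ) (hk : k < (svals μ).length) :
    (svals μ)[k] = (μ.length - 1 - k) + (μ[k]'(by simpa [svals] using hk)) := by
  simp [svals]

private lemma getElem_append3 {α : Type*} (A B C : List α) (k : ℕ)
    (h : k < (A ++ (B ++ C)).length) :
    (A ++ (B ++ C))[k] =
      if h1 : k < A.length then A[k]
      else if h2 : k - A.length < B.length then B[k - A.length]
      else C[k - A.length - B.length]'(by simp at h ⊢; omega) := by
  split
  · exact List.getElem_append_left ‹_›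
  · rename_i h1
    rw [List.getElem_append_right (by omega)]
    split
    · exact List.getElem_append_left ‹_›
    · rename_i h2
      rw [List.getElem_append_right (by omega)]

private lemma countP_window (m t : ℕ) (h : 2 * m ≤ t + 1) :
    ((List.range (2*m)).map (fun q => t - q)).countP (fun x => decide (x % 2 = 1)) = m ∧
    ((List.range (2*m)).map (fun q => t - q)).countP (fun x => decide (x % 2 = 0)) = m := by
  induction m with
  | zero => simp
  | succ n ih =>
    have h' : 2*n ≤ t + 1 := by omega
    obtain ⟨h1, h2⟩ := ih h'
    have e : 2 * (n+1) = (2*n + 1) + 1 := by ring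
    rw [e, List.range_succ, List.range_succ]
    have hparity : ((t - 2*n) % 2 = 1 ∧ (t - (2*n+1)) % 2 = 0)
        ∨ ((t - 2*n) % 2 = 0 ∧ (t - (2*n+1)) % 2 = 1) := by omega
    rcases hparity with ⟨p1, p2⟩ | ⟨p1, p2⟩ <;>
      simp [List.countP_append, List.countP_cons, p1, p2, h1, h2] <;> omega

private lemma par_bound (L : List ℕ) (d : ℕ) (hd : d < 2)
    (hs : L.Pairwise (· < ·)) (hp : ∀ x ∈ L, x % 2 = d) :
    ∀ a (h : a < L.length), 2 * a + d ≤ L[a] := by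
  intro a
  induction a with
  | zero =>
    intro h
    have := hp L[0] (List.getElem_mem h)
    omega
  | succ n ih =>
    intro h
    have hn : n < L.length := by omega
    have hb := ih hn
    have hlt : L[n] < L[n+1] :=
      List.pairwise_iff_getElem.mp hs n (n+1) hn h (by omega)
    have e1 := hp L[n] (List.getElem_mem hn)
    have e2 := hp L[n+1] (List.getElem_mem h)
    omega

private lemma row_bump {L L' : List ℕ} (g : ℕ → ℕ → ℕ) {j m r : ℕ}
    (T W H : List ℕ)
    (hL : L = T ++ (W ++ H)) (hL' : L' = T ++ (W.map (fun x => x + 2 * r) ++ H))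
    (hj : T.length = j) (hm : W.length = m)
    (hbump : ∀ a (h : a < L.length), j ≤ a → a < j + m →
      g a (L[a] + 2 * r) = g a (L[a]) + r) :
    L'.mapIdx g = (L.mapIdx g).mapIdx
      (fun a v => if j ≤ a ∧ a < j + m then v + r else v) := by
  subst hL hL' hj hm
  apply List.ext_getElem (by simp)
  intro a h1 h2
  simp only [List.getElem_mapIdx]
  rw [getElem_append3, getElem_append3]
  simp only [List.length_map]
  by_cases c1 : a < T.length
  · rw [dif_pos c1, dif_pos c1, if_neg (by omega)]
  · rw [dif_neg c1, dif_neg c1]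
    by_cases c2 : a - T.length < W.length
    · rw [dif_pos c2, dif_pos c2, List.getElem_map,
        if_pos ⟨by omega, by omega⟩]
      have ha : a < (T ++ (W ++ H)).length := by
        simp only [List.length_mapIdx, List.length_append] at h2 ⊢
        omega
      have hb := hbump a ha (by omega) (by omega)
      rw [getElem_append3, dif_neg c1, dif_pos c2] at hb
      exact hb
    · rw [dif_neg c2, dif_neg c2, if_neg (by omega)]

/-- **Rectangle rule.** Let `μ` be weakly decreasing with `2m` equal
consecutive parts `μ_i = … = μ_{i+2m-1}` (0-based indices, `i + 2m ≤ l`),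
with `i` the first index or `μ_{i-1} ≥ μ_i + 2r`, and let `μ'` add `2r` to
each of these `2m` parts.  Among `s_i, …, s_{i+2m-1}` there are exactly `m`
odd values, occupying `m` consecutive ranks `j, …, j+m-1` (0-based) in the
increasing list of odd values of `s`, and exactly `m` even values, occupying
`m` consecutive ranks `j', …, j'+m-1` in the increasing list of even values;
and the symbol of `μ'` is the symbol of `μ` with those `m` top-row entries
and those `m` bottom-row entries each increased by `r`. -/
theorem rectangleRule (μ : List ℕ) (hsort : μ.Pairwise (· ≥ ·)) (i m r : ℕ)
    (hm : 1 ≤ m) (hr : 1 ≤ r) (hle : i + 2 * m ≤ μ.length)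
    (heq : ∀ k, i ≤ k → k < i + 2 * m → μ.getD k 0 = μ.getD i 0)
    (hsep : i = 0 ∨ μ.getD (i - 1) 0 ≥ μ.getD i 0 + 2 * r) :
    ∀ μ' : List ℕ,
      μ' = μ.mapIdx (fun k a => if i ≤ k ∧ k < i + 2 * m then a + 2 * r else a) →
    ∀ window : List ℕ, window = ((svals μ).drop i).take (2 * m) →
    (window.countP (fun x => decide (x % 2 = 1))) = m ∧
    (window.countP (fun x => decide (x % 2 = 0))) = m ∧
    ∃ j j' : ℕ,
      ((oddVals μ).drop j).take m
          = (window.filter (fun x => decide (x % 2 = 1))).reverse ∧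
      ((evenVals μ).drop j').take m
          = (window.filter (fun x => decide (x % 2 = 0))).reverse ∧
      topRow μ' = (topRow μ).mapIdx
        (fun a v => if j ≤ a ∧ a < j + m then v + r else v) ∧
      botRow μ' = (botRow μ).mapIdx
        (fun b v => if j' ≤ b ∧ b < j' + m then v + r else v) := by
  clear hsep
  intro μ' hμ' window hwindow
  have hl := svals_length μ
  have hlen' : μ'.length = μ.length := by simp [hμ']
  have hcval : ∀ k, i ≤ k → k < i + 2*m → ∀ h : k < μ.length,
      μ[k] = μ.getD i 0 := by
    intro k h1 h2 h3
    have := heq k h1 h2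
    rwa [List.getD_eq_getElem _ _ h3] at this
  set c := μ.getD i 0 with hc
  set t := μ.length - 1 - i + c with ht
  have hwl : window.length = 2*m := by
    rw [hwindow]
    simp [hl]
    omega
  have hwget : ∀ q (hq : q < window.length), window[q] = t - q := by
    intro q hq
    have hq' : q < 2*m := by omega
    have hkl : i + q < μ.length := by omega
    subst hwindow
    rw [List.getElem_take, List.getElem_drop, svals_getElem]
    rw [hcval (i+q) (by omega) (by omega) hkl]
    omega
  have hwin : window = (List.range (2*m)).map (fun q => t - q) := by
    apply List.ext_getElem (by simp [hwl])
    intro q h1 h2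
    rw [hwget q h1]
    simp
  have ht2 : 2*m ≤ t + 1 := by omega
  obtain ⟨hc1, hc2⟩ := countP_window m t ht2
  have hcw1 : window.countP (fun x => decide (x % 2 = 1)) = m := by
    rw [hwin]; exact hc1
  have hcw2 : window.countP (fun x => decide (x % 2 = 0)) = m := by
    rw [hwin]; exact hc2
  refine ⟨hcw1, hcw2, ?_⟩
  -- decomposition of svals μ
  set Hd := (svals μ).take i with hHd
  set T := (svals μ).drop (i + 2*m) with hT
  have hdecomp : svals μ = Hd ++ (window ++ T) := by
    have h2 : (svals μ).drop i = window ++ T := by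
      rw [hwindow, hT]
      have h3 := List.take_append_drop (2*m) ((svals μ).drop i)
      rw [List.drop_drop] at h3
      exact h3.symm
    calc svals μ = (svals μ).take i ++ (svals μ).drop i :=
          (List.take_append_drop i _).symm
      _ = Hd ++ (window ++ T) := by rw [h2]
  have hμget : ∀ k (h : k < μ.length),
      μ'[k]'(by rw [hlen']; exact h) =
        if i ≤ k ∧ k < i + 2*m then μ[k] + 2*r else μ[k] := by
    intro k h
    simp only [hμ', List.getElem_mapIdx]
  have hHdl : Hd.length = i := by
    rw [hHd]; simp [hl]; omega
  have hTl : T.length = μ.length - (i + 2*m) := by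
    rw [hT]; simp [hl]
  have hS' : svals μ' = Hd ++ (window.map (fun x => x + 2*r) ++ T) := by
    apply List.ext_getElem
    · simp only [svals_length, hlen', List.length_append, List.length_map,
        hHdl, hTl, hwl]
      omega
    · intro k hk1 hk2
      have hkμ : k < μ.length := by rwa [svals_length, hlen'] at hk1
      rw [svals_getElem, hμget k hkμ, hlen', getElem_append3]
      simp only [List.length_map, hwl, hHdl]
      by_cases h1 : k < i
      · rw [dif_pos h1, if_neg (by omega)]
        simp only [hHd, List.getElem_take]
        rw [svals_getElem]
      · rw [dif_neg h1]
        by_cases h2 : k < i + 2*m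
        · rw [dif_pos (by omega), if_pos ⟨by omega, h2⟩, List.getElem_map,
            hwget _ (by omega)]
          rw [hcval k (by omega) h2 hkμ]
          omega
        · rw [dif_neg (by omega), if_neg (by omega)]
          have hidx : i + 2*m + (k - i - 2*m) = k := by omega
          simp only [hT, List.getElem_drop, hidx]
          rw [svals_getElem]
  -- sortedness facts
  have hSpair : (svals μ).Pairwise (· > ·) := by
    rw [List.pairwise_iff_getElem]
    intro a b ha hb hab
    have hsrt := List.pairwise_iff_getElem.mp hsort a b
      (by rwa [hl] at ha) (by rwa [hl] at hb) hab
    rw [svals_getElem, svals_getElem]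
    have haμ : a < μ.length := by rwa [hl] at ha
    have hbμ : b < μ.length := by rwa [hl] at hb
    simp only [gt_iff_lt]
    omega
  have hoddpair : (oddVals μ).Pairwise (· < ·) := by
    rw [oddVals, List.pairwise_reverse]
    exact hSpair.filter _
  have hevenpair : (evenVals μ).Pairwise (· < ·) := by
    rw [evenVals, List.pairwise_reverse]
    exact hSpair.filter _
  have hoddmem : ∀ x ∈ oddVals μ, x % 2 = 1 := by
    intro x hx
    rw [oddVals, List.mem_reverse] at hx
    simpa using List.of_mem_filter hx
  have hevenmem : ∀ x ∈ evenVals μ, x % 2 = 0 := by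
    intro x hx
    rw [evenVals, List.mem_reverse] at hx
    simpa using List.of_mem_filter hx
  have hboundo := par_bound (oddVals μ) 1 (by omega) hoddpair hoddmem
  have hbounde := par_bound (evenVals μ) 0 (by omega) hevenpair hevenmem
  -- filter-map commutation
  have hfilmap : ∀ (L : List ℕ) (d : ℕ),
      (L.map (fun x => x + 2*r)).filter (fun x => decide (x % 2 = d))
        = (L.filter (fun x => decide (x % 2 = d))).map (fun x => x + 2*r) := by
    intro L d
    rw [List.filter_map]
    congr 1
    apply List.filter_congr
    intro x _
    simp only [Function.comp]
    have hx : (x + 2*r) % 2 = x % 2 := by omega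
    rw [hx]
  -- odd decompositions
  have hoddμ : oddVals μ =
      (T.filter (fun x => decide (x % 2 = 1))).reverse ++
        ((window.filter (fun x => decide (x % 2 = 1))).reverse ++
          (Hd.filter (fun x => decide (x % 2 = 1))).reverse) := by
    rw [oddVals, hdecomp]
    simp [List.filter_append, List.reverse_append]
  have hodd' : oddVals μ' =
      (T.filter (fun x => decide (x % 2 = 1))).reverse ++
        (((window.filter (fun x => decide (x % 2 = 1))).reverse).map
            (fun x => x + 2*r) ++
          (Hd.filter (fun x => decide (x % 2 = 1))).reverse) := by
    rw [oddVals, hS']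
    simp [List.filter_append, List.reverse_append, hfilmap, List.map_reverse]
  have hevenμ : evenVals μ =
      (T.filter (fun x => decide (x % 2 = 0))).reverse ++
        ((window.filter (fun x => decide (x % 2 = 0))).reverse ++
          (Hd.filter (fun x => decide (x % 2 = 0))).reverse) := by
    rw [evenVals, hdecomp]
    simp [List.filter_append, List.reverse_append]
  have heven' : evenVals μ' =
      (T.filter (fun x => decide (x % 2 = 0))).reverse ++
        (((window.filter (fun x => decide (x % 2 = 0))).reverse).map
            (fun x => x + 2*r) ++
          (Hd.filter (fun x => decide (x % 2 = 0))).reverse) := by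
    rw [evenVals, hS']
    simp [List.filter_append, List.reverse_append, hfilmap, List.map_reverse]
  set j := ((T.filter (fun x => decide (x % 2 = 1))).reverse).length with hj
  set j' := ((T.filter (fun x => decide (x % 2 = 0))).reverse).length with hj'
  have hWOl : ((window.filter (fun x => decide (x % 2 = 1))).reverse).length = m := by
    rw [List.length_reverse, ← List.countP_eq_length_filter]
    exact hcw1
  have hWEl : ((window.filter (fun x => decide (x % 2 = 0))).reverse).length = m := by
    rw [List.length_reverse, ← List.countP_eq_length_filter]
    exact hcw2
  refine ⟨j, j', ?_, ?_, ?_, ?_⟩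
  · rw [hoddμ, List.drop_left' hj.symm, List.take_left' hWOl]
  · rw [hevenμ, List.drop_left' hj'.symm, List.take_left' hWEl]
  · show (oddVals μ').mapIdx _ = ((oddVals μ).mapIdx _).mapIdx _
    apply row_bump _ _ _ _ hoddμ hodd' hj.symm hWOl
    intro a h ha1 ha2
    have hv1 := hoddmem _ (List.getElem_mem h)
    have hv2 := hboundo a h
    omega
  · show (evenVals μ').mapIdx _ = ((evenVals μ).mapIdx _).mapIdx _
    apply row_bump _ _ _ _ hevenμ heven' hj'.symm hWEl
    intro a h ha1 ha2
    have hv1 := hevenmem _ (List.getElem_mem h)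
    have hv2 := hbounde a h
    omega
end
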